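/- Let u and v be relatively prime integers with u > v ≥ 1, and let f(x,y) = ux + vy and g(x,y) = ux − vy. If A is an arithmetic progression of integers of length t with 1 ≤ t ≤ u, then |f(A)| = |g(A)| = t². -/
import Mathlib


/-- The image of a finite set `A` of integers under the binary linear form
`f(x,y) = u x + v y`. -/
def binFormImage (u v : ℤ) (A : Finset ℤ) : Finset ℤ :=
  (A ×ˢ A).image fun p => u * p.1 + v * p.2

lemma binFormImage_card_key (u w : ℤ) (hu : 0 < u) (hcop : IsCoprime u w)
    (t : ℕ) (ht : (t : ℤ) ≤ u) (a d : ℤ) (hd : d ≠ 0) :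
    (binFormImage u w ((Finset.range t).image fun i : ℕ => a + (i : ℤ) * d)).card = t ^ 2 := by
  set A := (Finset.range t).image fun i : ℕ => a + (i : ℤ) * d with hA
  have hcardA : A.card = t := by
    rw [hA, Finset.card_image_of_injective _ ?_, Finset.card_range]
    intro i j h
    simp only at h
    have : (i : ℤ) = (j : ℤ) := mul_right_cancel₀ hd (by linarith)
    exact_mod_cast this
  unfold binFormImage
  rw [Finset.card_image_of_injOn, Finset.card_product, hcardA, sq]
  intro p hp q hq h
  rw [Finset.mem_coe, Finset.mem_product] at hp hq
  obtain ⟨i, hi, hpi⟩ := Finset.mem_image.1 hp.1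
  obtain ⟨j, hj, hpj⟩ := Finset.mem_image.1 hp.2
  obtain ⟨i', hi', hqi⟩ := Finset.mem_image.1 hq.1
  obtain ⟨j', hj', hqj⟩ := Finset.mem_image.1 hq.2
  rw [Finset.mem_range] at hi hj hi' hj'
  simp only at h
  rw [← hpi, ← hpj, ← hqi, ← hqj] at h
  have key : (u * ((i : ℤ) - i') + w * ((j : ℤ) - j')) * d = 0 := by ring_nf; linarith [h]
  have key2 : u * ((i : ℤ) - i') + w * ((j : ℤ) - j') = 0 :=
    (mul_eq_zero.1 key).resolve_right hd
  have hdvd : u ∣ w * ((j : ℤ) - j') := ⟨-((i : ℤ) - i'), by linarith⟩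
  have hdvd2 : u ∣ (j : ℤ) - j' := hcop.dvd_of_dvd_mul_left hdvd
  have hji : (j : ℤ) < t := by exact_mod_cast hj
  have hji' : (j' : ℤ) < t := by exact_mod_cast hj'
  have hjj : (j : ℤ) = j' := by
    obtain ⟨k, hk⟩ := hdvd2
    have hk0 : k = 0 := by
      rcases lt_trichotomy k 0 with hlt | h0 | hgt
      · have h1 : u * k ≤ u * (-1) :=
          mul_le_mul_of_nonneg_left (by omega) (le_of_lt hu)
        have := Int.natCast_nonneg j; have := Int.natCast_nonneg j'
        linarith
      · exact h0
      · have h1 : u * 1 ≤ u * k :=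
          mul_le_mul_of_nonneg_left (by omega) (le_of_lt hu)
        have := Int.natCast_nonneg j; have := Int.natCast_nonneg j'
        linarith
    simp [hk0] at hk; linarith
  have hii : (i : ℤ) = i' := by
    have : u * ((i : ℤ) - i') = 0 := by rw [hjj] at key2; linarith
    have := (mul_eq_zero.1 this).resolve_left (by linarith)
    linarith
  have hp1 : p.1 = q.1 := by rw [← hpi, ← hqi, hii]
  have hp2 : p.2 = q.2 := by rw [← hpj, ← hqj, hjj]
  exact Prod.ext hp1 hp2

theorem stmt_10 (u v : ℤ) (hv : 1 ≤ v) (huv : v < u) (hcop : Int.gcd u v = 1)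
    (t : ℕ) (ht1 : 1 ≤ t) (ht : (t : ℤ) ≤ u) (a d : ℤ) (hd : d ≠ 0)
    (A : Finset ℤ) (hA : A = (Finset.range t).image fun i : ℕ => a + (i : ℤ) * d) :
    (binFormImage u v A).card = t ^ 2 ∧ (binFormImage u (-v) A).card = t ^ 2 := by
  have hu : 0 < u := by linarith
  have hc : IsCoprime u v := Int.isCoprime_iff_gcd_eq_one.2 hcop
  subst hA
  exact ⟨binFormImage_card_key u v hu hc t ht a d hd,
    binFormImage_card_key u (-v) hu hc.neg_right t ht a d hd⟩
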